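/- arXiv:0902.0297 — 2 statements merged into one kernel-verified Lean document; each statement's English description precedes it below -/
import Mathlib

section
/- In a left adequate semigroup, for every element a and every idempotent e, ea⁺ = (ea)⁺. -/
/-- `a 𝓡* b` in a semigroup `S`: for all `x, y` in `S¹ = WithOne S`,
`x * a = y * a ↔ x * b = y * b`. -/
def RStar {S : Type*} [Semigroup S] (a b : S) : Prop :=
  ∀ x y : WithOne S, x * (a : WithOne S) = y * (a : WithOne S) ↔
    x * (b : WithOne S) = y * (b : WithOne S)

/-- A witness that the semigroup `S` is left adequate: every element `a` has an
idempotent `plus a` in its `𝓡*`-class, and idempotents commute. -/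
structure LeftAdequate (S : Type*) [Semigroup S] where
  plus : S → S
  plus_idem : ∀ a : S, IsIdempotentElem (plus a)
  plus_rstar : ∀ a : S, RStar a (plus a)
  idem_comm : ∀ e f : S, IsIdempotentElem e → IsIdempotentElem f → e * f = f * e


/-- In a left adequate semigroup, `e a⁺ = (ea)⁺` for every `a` and idempotent `e`. -/
theorem idem_mul_plus {S : Type*} [Semigroup S] (L : LeftAdequate S) (a e : S)
    (he : IsIdempotentElem e) : e * L.plus a = L.plus (e * a) := by
  set p := L.plus a with hp
  set q := L.plus (e * a) with hq
  have hpi : IsIdempotentElem p := L.plus_idem a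
  have hqi : IsIdempotentElem q := L.plus_idem (e * a)
  -- p * a = a
  have hpa : p * a = a := by
    have h := (L.plus_rstar a (↑p) 1).mpr (by
      rw [← WithOne.coe_mul, hpi.eq, one_mul])
    rw [← WithOne.coe_mul, one_mul] at h
    exact WithOne.coe_inj.mp h
  -- q * (e * a) = e * a
  have hqea : q * (e * a) = e * a := by
    have h := (L.plus_rstar (e * a) (↑q) 1).mpr (by
      rw [← WithOne.coe_mul, hqi.eq, one_mul])
    rw [← WithOne.coe_mul, one_mul] at h
    exact WithOne.coe_inj.mp h
  have hcom : p * e = e * p := L.idem_comm p e hpi he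
  -- (*) : (q * e) * p = e * p
  have h1 : q * e * p = e * p := by
    have h := (L.plus_rstar a (↑(q * e)) (↑e)).mp (by
      rw [← WithOne.coe_mul, ← WithOne.coe_mul, mul_assoc, hqea])
    rw [← WithOne.coe_mul, ← WithOne.coe_mul] at h
    exact WithOne.coe_inj.mp h
  -- (**) : (e * p) * q = q
  have h2 : e * p * q = q := by
    have key : e * p * (e * a) = e * a := by
      calc e * p * (e * a) = e * (p * e) * a := by simp [mul_assoc]
        _ = e * e * (p * a) := by rw [hcom]; simp [mul_assoc]
        _ = e * a := by rw [he.eq, hpa]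
    have h := (L.plus_rstar (e * a) (↑(e * p)) 1).mp (by
      rw [← WithOne.coe_mul, one_mul, key])
    rw [← WithOne.coe_mul, one_mul] at h
    exact WithOne.coe_inj.mp h
  have hepi : IsIdempotentElem (e * p) := by
    show e * p * (e * p) = e * p
    calc e * p * (e * p) = e * (p * e) * p := by simp [mul_assoc]
      _ = e * e * (p * p) := by rw [hcom]; simp [mul_assoc]
      _ = e * p := by rw [he.eq, hpi.eq]
  have hc := L.idem_comm (e * p) q hepi hqi
  calc e * p = q * e * p := h1.symm
    _ = q * (e * p) := by rw [mul_assoc]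
    _ = e * p * q := hc.symm
    _ = q := h2
end

section
/- In any adequate monoid M, for elements B, C, x with B and C idempotent, the identity [B(xC)⁺x]* · (Bx)*C = (Bx)*C holds. -/
/-- `a 𝓡* b` in a monoid `M`: for all `x, y ∈ M`, `x a = y a ↔ x b = y b`. -/
def RStarM {M : Type*} [Monoid M] (a b : M) : Prop :=
  ∀ x y : M, x * a = y * a ↔ x * b = y * b

/-- `a 𝓛* b` in a monoid `M`: for all `x, y ∈ M`, `a x = a y ↔ b x = b y`. -/
def LStarM {M : Type*} [Monoid M] (a b : M) : Prop :=
  ∀ x y : M, a * x = a * y ↔ b * x = b * y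

/-- A witness that the monoid `M` is adequate: each element `a` has an idempotent
`plus a` in its `𝓡*`-class and an idempotent `star a` in its `𝓛*`-class, and
idempotents commute. -/
structure AdequateMonoid (M : Type*) [Monoid M] where
  plus : M → M
  star : M → M
  plus_idem : ∀ a : M, IsIdempotentElem (plus a)
  star_idem : ∀ a : M, IsIdempotentElem (star a)
  plus_rstar : ∀ a : M, RStarM a (plus a)
  star_lstar : ∀ a : M, LStarM a (star a)
  idem_comm : ∀ e f : M, IsIdempotentElem e → IsIdempotentElem f → e * f = f * e

namespace AdequateMonoid

variable {M : Type*} [Monoid M] (D : AdequateMonoid M)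

theorem plus_mul (a : M) : D.plus a * a = a := by
  have := (D.plus_rstar a (D.plus a) 1).mpr (by simp [(D.plus_idem a).eq])
  simpa using this

theorem lstar_idem_eq (D : AdequateMonoid M) {e f : M} (he : IsIdempotentElem e) (hf : IsIdempotentElem f)
    (h : LStarM e f) : e = f := by
  have h1 : e * f = e := by
    have := (h f 1).mpr (by simp [hf.eq]); simpa using this
  have h2 : f * e = f := by
    have := (h e 1).mp (by simp [he.eq]); simpa using this
  calc e = e * f := h1.symm
    _ = f * e := D.idem_comm e f he hf
    _ = f := h2

theorem star_mul_idem (a e : M) (he : IsIdempotentElem e) :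
    D.star a * e = D.star (a * e) := by
  have hcomm := D.idem_comm (D.star a) e (D.star_idem a) he
  have hse : IsIdempotentElem (D.star a * e) := by
    show D.star a * e * (D.star a * e) = D.star a * e
    rw [mul_assoc (D.star a) e (D.star a * e), ← mul_assoc e (D.star a) e, ← hcomm,
      mul_assoc (D.star a) e e, he.eq, ← mul_assoc, (D.star_idem a).eq]
  apply D.lstar_idem_eq hse (D.star_idem (a * e))
  intro u v
  constructor
  · intro h
    have h' : a * (e * u) = a * (e * v) :=
      (D.star_lstar a _ _).mpr (by simpa [mul_assoc] using h)
    exact (D.star_lstar (a * e) u v).mp (by simpa [mul_assoc] using h')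
  · intro h
    have h' : a * (e * u) = a * (e * v) := by
      have := (D.star_lstar (a * e) u v).mpr h
      simpa [mul_assoc] using this
    have := (D.star_lstar a (e * u) (e * v)).mp h'
    simpa [mul_assoc] using this

end AdequateMonoid

/-- In any adequate monoid, for idempotents `B, C` and any `x`,
`[B (xC)⁺ x]* · (Bx)* C = (Bx)* C`. -/
theorem star_absorb {M : Type*} [Monoid M] (D : AdequateMonoid M) (B C x : M)
    (hB : IsIdempotentElem B) (hC : IsIdempotentElem C) :
    D.star (B * D.plus (x * C) * x) * (D.star (B * x) * C) =
      D.star (B * x) * C := by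
  set a := B * D.plus (x * C) * x with ha
  have haC : a * C = B * x * C := by
    calc B * D.plus (x * C) * x * C = B * (D.plus (x * C) * (x * C)) := by
          simp [mul_assoc]
      _ = B * (x * C) := by rw [D.plus_mul]
      _ = B * x * C := by rw [mul_assoc]
  have h1 : D.star a * C = D.star (B * x) * C := by
    rw [D.star_mul_idem a C hC, haC, ← D.star_mul_idem (B * x) C hC]
  have hcomm := D.idem_comm (D.star a) (D.star (B * x)) (D.star_idem _) (D.star_idem _)
  calc D.star a * (D.star (B * x) * C) = D.star (B * x) * (D.star a * C) := by
        rw [← mul_assoc, hcomm, mul_assoc]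
    _ = D.star (B * x) * (D.star (B * x) * C) := by rw [h1]
    _ = D.star (B * x) * C := by rw [← mul_assoc, (D.star_idem (B * x)).eq]
end
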